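/- Let α > 0, μ̃ > 0, t ∈ (0,1] and φ ≥ 0 satisfy φ ≤ √(μ̃/α)·t. Then the supremum, over all deterministic admissible strategies ζ on [0,t] with initial holdings φ, of ∫₀ᵗ ζ(r)·exp(−μ̃·r − α·∫₀ʳ ζ(v)² dv) dr is equal to (1 − e^{−2√(α·μ̃)·φ})/(2√(α·μ̃)), and it is attained by the strategy ζ(r) = √(μ̃/α)·1_{[0, φ·√(α/μ̃)]}(r). (This is case (ii) of the log-quadratic impact problem, where g(ζ) = α·ζ².) -/

import Mathlib

open MeasureTheory intervalIntegral Set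

lemma IntervalIntegrable.of_bound' {f : ℝ → ℝ} {a b C : ℝ}
    (hm : Measurable f) (hC : ∀ x ∈ Set.uIoc a b, |f x| ≤ C) :
    IntervalIntegrable f volume a b := by
  apply IntervalIntegrable.mono_fun (_root_.intervalIntegrable_const (c := C))
    hm.aestronglyMeasurable
  filter_upwards [ae_restrict_mem measurableSet_uIoc] with x hx
  simpa [Real.norm_eq_abs] using (hC x hx).trans (le_abs_self C)

lemma exp_bound_aux {x : ℝ} (hx : 0 ≤ x) : Real.exp (-x) - 1 + x ≤ x ^ 2 / 2 := by
  have h2 : (∫ s in (0:ℝ)..x, (1 - s)) ≤ ∫ s in (0:ℝ)..x, Real.exp (-s) := by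
    apply intervalIntegral.integral_mono_on hx
      (Continuous.intervalIntegrable (by fun_prop) _ _)
      (Continuous.intervalIntegrable (by fun_prop) _ _)
    intro s _
    have := Real.add_one_le_exp (-s)
    linarith
  have h3 : (∫ s in (0:ℝ)..x, (1 - s)) = x - x ^ 2 / 2 := by
    rw [intervalIntegral.integral_sub intervalIntegrable_const intervalIntegrable_id]
    simp [integral_id]
  have h4 : (∫ s in (0:ℝ)..x, Real.exp (-s)) = 1 - Real.exp (-x) := by
    have hd : ∀ s : ℝ, HasDerivAt (fun u : ℝ => -Real.exp (-u)) (Real.exp (-s)) s := by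
      intro s
      have h := ((Real.hasDerivAt_exp (-s)).comp s (hasDerivAt_neg s)).neg
      simpa [Function.comp_def, Pi.neg_def] using h
    rw [intervalIntegral.integral_eq_sub_of_hasDerivAt (fun s _ => hd s)
      (Continuous.intervalIntegrable (by fun_prop) _ _)]
    simp
    ring
  linarith

lemma key_ineq (h : ℝ → ℝ) (hm : Measurable h) (C : ℝ) (h0 : ∀ r, 0 ≤ h r)
    (hC : ∀ r, h r ≤ C) (t : ℝ) (ht : 0 ≤ t) :
    (∫ r in (0:ℝ)..t, h r * Real.exp (-∫ v in (0:ℝ)..r, h v))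
      ≤ 1 - Real.exp (-∫ r in (0:ℝ)..t, h r) := by
  have hC0 : 0 ≤ C := (h0 0).trans (hC 0)
  have habs : ∀ x, |h x| ≤ C := fun x => by
    rw [abs_of_nonneg (h0 x)]; exact hC x
  have hint : ∀ a b : ℝ, IntervalIntegrable h volume a b := fun a b =>
    IntervalIntegrable.of_bound' hm (fun x _ => habs x)
  set G : ℝ → ℝ := fun x => ∫ v in (0:ℝ)..x, h v with hG
  have hGcont : Continuous G := intervalIntegral.continuous_primitive hint 0
  have hGadd : ∀ a b : ℝ, G b - G a = ∫ v in a..b, h v := fun a b => by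
    have := intervalIntegral.integral_add_adjacent_intervals (hint 0 a) (hint a b)
    simp only [hG]; linarith
  have hGmono : Monotone G := by
    intro a b hab
    have h1 := hGadd a b
    have h2 : (0:ℝ) ≤ ∫ v in a..b, h v :=
      intervalIntegral.integral_nonneg hab (fun u _ => h0 u)
    linarith
  have hG0 : G 0 = 0 := intervalIntegral.integral_same
  have hGnonneg : ∀ x, 0 ≤ x → 0 ≤ G x := fun x hx => hG0 ▸ hGmono hx
  -- integrand
  set f : ℝ → ℝ := fun r => h r * Real.exp (-G r) with hf
  have hfmeas : Measurable f := hm.mul ((Real.continuous_exp.comp hGcont.neg).measurable)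
  have hfint : ∀ a b : ℝ, 0 ≤ a → 0 ≤ b → IntervalIntegrable f volume a b := by
    intro a b ha hb
    apply IntervalIntegrable.of_bound' hfmeas
    intro x hx
    have hx0 : 0 ≤ x := le_of_lt (lt_of_le_of_lt (le_min ha hb) hx.1)
    have he : Real.exp (-G x) ≤ 1 := by
      simpa using Real.exp_le_exp.2 (neg_nonpos.2 (hGnonneg x hx0))
    rw [abs_of_nonneg (mul_nonneg (h0 x) (Real.exp_pos _).le)]
    calc h x * Real.exp (-G x) ≤ C * 1 :=
          mul_le_mul (hC x) he (Real.exp_pos _).le hC0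
      _ = C := mul_one C
  set u : ℝ → ℝ := fun x => Real.exp (-G x) + ∫ r in (0:ℝ)..x, f r with hu
  -- one-step estimate
  have step : ∀ a b : ℝ, 0 ≤ a → a ≤ b → u b - u a ≤ (C * (b - a)) ^ 2 / 2 := by
    intro a b ha hab
    have hb : 0 ≤ b := ha.trans hab
    have hsplit : (∫ r in (0:ℝ)..b, f r) - ∫ r in (0:ℝ)..a, f r = ∫ r in a..b, f r := by
      have := intervalIntegral.integral_add_adjacent_intervals
        (hfint 0 a le_rfl ha) (hfint a b ha hb)
      linarith
    set x := G b - G a with hx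
    have hx0 : 0 ≤ x := sub_nonneg.2 (hGmono hab)
    have hxC : x ≤ C * (b - a) := by
      rw [hx, hGadd a b]
      calc (∫ v in a..b, h v) ≤ ∫ _ in a..b, C :=
            intervalIntegral.integral_mono_on hab (hint a b)
              intervalIntegrable_const (fun r _ => hC r)
        _ = C * (b - a) := by simp [mul_comm]
    have hmain : (∫ r in a..b, f r) ≤ Real.exp (-G a) * x := by
      have h1 : (∫ r in a..b, f r) ≤ ∫ r in a..b, h r * Real.exp (-G a) := by
        apply intervalIntegral.integral_mono_on hab (hfint a b ha hb)
          ((hint a b).mul_const _)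
        intro r hr
        exact mul_le_mul_of_nonneg_left
          (Real.exp_le_exp.2 (neg_le_neg (hGmono hr.1))) (h0 r)
      have h2 : (∫ r in a..b, h r * Real.exp (-G a)) = Real.exp (-G a) * x := by
        rw [intervalIntegral.integral_mul_const, hx, hGadd a b, mul_comm]
      linarith
    have hexp : Real.exp (-G b) = Real.exp (-G a) * Real.exp (-x) := by
      rw [← Real.exp_add]; congr 1; rw [hx]; ring
    have hea : Real.exp (-G a) ≤ 1 := by
      simpa using Real.exp_le_exp.2 (neg_nonpos.2 (hGnonneg a ha))
    have hnn : 0 ≤ Real.exp (-x) - 1 + x := by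
      have := Real.add_one_le_exp (-x); linarith
    have hbd := exp_bound_aux hx0
    have hsq : x ^ 2 ≤ (C * (b - a)) ^ 2 := by nlinarith
    have : u b - u a = (Real.exp (-G b) - Real.exp (-G a)) + ∫ r in a..b, f r := by
      simp only [hu]; linarith
    rw [this, hexp]
    have hfinal : Real.exp (-G a) * Real.exp (-x) - Real.exp (-G a)
        + Real.exp (-G a) * x = Real.exp (-G a) * (Real.exp (-x) - 1 + x) := by ring
    nlinarith [Real.exp_pos (-G a)]
  -- telescoping over a uniform partition
  have main : ∀ n : ℕ, 0 < n → u t - u 0 ≤ (C * t) ^ 2 / (2 * n) := by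
    intro n hn
    have hnR : (0:ℝ) < n := Nat.cast_pos.2 hn
    have htel := Finset.sum_range_sub (fun i : ℕ => u (i * (t / n))) n
    have hlast : (n : ℝ) * (t / n) = t := by field_simp
    have hsum : (∑ i ∈ Finset.range n,
        (u ((i + 1 : ℕ) * (t / n)) - u (i * (t / n)))) = u t - u 0 := by
      rw [htel]; simp [hlast]
    have hstep : ∀ i ∈ Finset.range n,
        u ((i + 1 : ℕ) * (t / n)) - u (i * (t / n)) ≤ (C * (t / n)) ^ 2 / 2 := by
      intro i _
      have h1 : (0:ℝ) ≤ i * (t / n) := by positivity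
      have h2 : (i : ℝ) * (t / n) ≤ (i + 1 : ℕ) * (t / n) := by
        have : ((i : ℝ)) ≤ (i + 1 : ℕ) := by push_cast; linarith
        exact mul_le_mul_of_nonneg_right this (by positivity)
      have := step (i * (t / n)) ((i + 1 : ℕ) * (t / n)) h1 h2
      have heq : ((i + 1 : ℕ) : ℝ) * (t / n) - i * (t / n) = t / n := by
        push_cast; ring
      rwa [heq] at this
    calc u t - u 0 = ∑ i ∈ Finset.range n,
          (u ((i + 1 : ℕ) * (t / n)) - u (i * (t / n))) := hsum.symm
      _ ≤ ∑ _i ∈ Finset.range n, (C * (t / n)) ^ 2 / 2 :=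
          Finset.sum_le_sum hstep
      _ = n * ((C * (t / n)) ^ 2 / 2) := by simp [mul_comm]
      _ = (C * t) ^ 2 / (2 * n) := by field_simp
  have hu0 : u 0 = 1 := by simp [hu, hG0]
  have hfin : u t ≤ 1 := by
    refine le_of_forall_pos_le_add fun ε hε => ?_
    obtain ⟨n, hn⟩ := exists_nat_gt ((C * t) ^ 2 / (2 * ε))
    have hn0 : 0 < n := by
      rcases Nat.eq_zero_or_pos n with hc | hc
      · subst hc
        simp only [Nat.cast_zero] at hn
        have hge : (0:ℝ) ≤ (C * t) ^ 2 / (2 * ε) := by positivity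
        linarith
      · exact hc
    have h1 := main n hn0
    have hnR : (0:ℝ) < n := Nat.cast_pos.2 hn0
    have h2 : (C * t) ^ 2 / (2 * n) ≤ ε := by
      rw [div_le_iff₀ (by positivity)]
      rw [div_lt_iff₀ (by positivity)] at hn
      nlinarith
    have h3 := le_trans h1 h2
    linarith
  have : (∫ r in (0:ℝ)..t, f r) = u t - Real.exp (-G t) := by simp [hu]
  rw [show (∫ r in (0:ℝ)..t, h r * Real.exp (-∫ v in (0:ℝ)..r, h v))
      = ∫ r in (0:ℝ)..t, f r from rfl, this]
  have : Real.exp (-G t) = Real.exp (-∫ r in (0:ℝ)..t, h r) := rfl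
  linarith [hfin, this.ge]

set_option maxHeartbeats 1000000 in
/-- case (ii) of the log-quadratic impact problem `g(ζ) = α ζ²`:
if `φ ≤ √(μ/α) t`, the supremum over deterministic admissible strategies of the
discounted proceeds equals `(1 - e^{-2 √(α μ) φ}) / (2 √(α μ))`, and it is attained
by the strategy `ζ(r) = √(μ/α) · 1_{[0, φ √(α/μ)]}(r)`. -/
theorem logQuadratic_value_case_ii (α μ t φ : ℝ) (hα : 0 < α) (hμ : 0 < μ)
    (ht : t ∈ Set.Ioc (0 : ℝ) 1) (hφ : 0 ≤ φ)
    (hcond : φ ≤ Real.sqrt (μ / α) * t) :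
    sSup {y : ℝ | ∃ ζ : ℝ → ℝ, Measurable ζ ∧
        (∃ M : ℝ, ∀ r ∈ Set.Icc (0 : ℝ) t, ζ r ≤ M) ∧
        (∀ r ∈ Set.Icc (0 : ℝ) t, 0 ≤ ζ r) ∧
        (∫ r in (0 : ℝ)..t, ζ r) ≤ φ ∧
        y = ∫ r in (0 : ℝ)..t,
              ζ r * Real.exp (-μ * r - α * ∫ v in (0 : ℝ)..r, ζ v ^ 2)}
      = (1 - Real.exp (-2 * Real.sqrt (α * μ) * φ)) / (2 * Real.sqrt (α * μ)) ∧
    (∫ r in (0 : ℝ)..t,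
        (Set.indicator (Set.Icc 0 (φ * Real.sqrt (α / μ)))
            (fun _ => Real.sqrt (μ / α)) r) *
          Real.exp (-μ * r - α * ∫ v in (0 : ℝ)..r,
            (Set.indicator (Set.Icc 0 (φ * Real.sqrt (α / μ)))
                (fun _ => Real.sqrt (μ / α)) v) ^ 2))
      = (1 - Real.exp (-2 * Real.sqrt (α * μ) * φ)) / (2 * Real.sqrt (α * μ)) := by
  obtain ⟨ht0, -⟩ := ht
  set c := Real.sqrt (α * μ) with hc
  have hc0 : 0 < c := Real.sqrt_pos.2 (by positivity)
  set k := Real.sqrt (μ / α) with hk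
  have hk0 : 0 < k := Real.sqrt_pos.2 (by positivity)
  have hk2 : k ^ 2 = μ / α := Real.sq_sqrt (by positivity)
  set s₀ := φ * Real.sqrt (α / μ) with hs₀
  have hs00 : 0 ≤ s₀ := by positivity
  have hroot : k * Real.sqrt (α / μ) = 1 := by
    rw [hk, ← Real.sqrt_mul (by positivity), show μ / α * (α / μ) = 1 by field_simp]
    exact Real.sqrt_one
  have hs0t : s₀ ≤ t :=
    calc s₀ = φ * Real.sqrt (α / μ) := rfl
      _ ≤ k * t * Real.sqrt (α / μ) :=
          mul_le_mul_of_nonneg_right hcond (Real.sqrt_nonneg _)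
      _ = t * (k * Real.sqrt (α / μ)) := by ring
      _ = t := by rw [hroot]; ring
  have hμc : μ * Real.sqrt (α / μ) = c := by
    rw [hc, ← Real.sqrt_sq hμ.le, ← Real.sqrt_mul (sq_nonneg μ)]
    congr 1
    field_simp
    simp [Real.sq_sqrt (sq_nonneg μ)]
  have hkc : k * c = μ := by
    rw [hk, hc, ← Real.sqrt_mul (by positivity),
      show μ / α * (α * μ) = μ ^ 2 by field_simp]
    exact Real.sqrt_sq hμ.le
  have hAMGM : ∀ z : ℝ, 2 * c * z ≤ μ + α * z ^ 2 := by
    intro z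
    have h1 : Real.sqrt α ^ 2 = α := Real.sq_sqrt hα.le
    have h2 : Real.sqrt μ ^ 2 = μ := Real.sq_sqrt hμ.le
    have h3 : Real.sqrt α * Real.sqrt μ = c := (Real.sqrt_mul hα.le μ).symm
    have hexp : (Real.sqrt α * z - Real.sqrt μ) ^ 2 = α * z ^ 2 - 2 * c * z + μ := by
      linear_combination z ^ 2 * h1 + h2 - 2 * z * h3
    nlinarith [sq_nonneg (Real.sqrt α * z - Real.sqrt μ), hexp]
  set ζ : ℝ → ℝ := Set.indicator (Set.Icc 0 s₀) (fun _ => k) with hζdef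
  have hζmeas : Measurable ζ := measurable_const.indicator measurableSet_Icc
  have hζval : ∀ r ∈ Set.Icc 0 s₀, ζ r = k := fun r hr => Set.indicator_of_mem hr _
  have hζzero : ∀ r, r ∉ Set.Icc 0 s₀ → ζ r = 0 := fun r hr => Set.indicator_of_notMem hr _
  have hζnn : ∀ r, 0 ≤ ζ r := fun r => Set.indicator_nonneg (fun _ _ => hk0.le) r
  have hζle : ∀ r, ζ r ≤ k := by
    intro r
    by_cases hr : r ∈ Set.Icc 0 s₀
    · rw [hζval r hr]
    · rw [hζzero r hr]; exact hk0.le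
  have hζabs : ∀ r, |ζ r| ≤ k := fun r => by
    rw [abs_of_nonneg (hζnn r)]; exact hζle r
  have hζint : ∀ a b : ℝ, IntervalIntegrable ζ volume a b := fun a b =>
    IntervalIntegrable.of_bound' hζmeas (fun x _ => hζabs x)
  have hζsqint : ∀ a b : ℝ, IntervalIntegrable (fun v => ζ v ^ 2) volume a b := by
    intro a b
    apply IntervalIntegrable.of_bound' (hζmeas.pow_const 2)
    intro x _
    rw [abs_of_nonneg (sq_nonneg _)]
    calc ζ x ^ 2 ≤ k ^ 2 := by nlinarith [hζnn x, hζle x]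
      _ ≤ k ^ 2 := le_rfl
  -- the inner integral on [0, s₀]
  have hQ : ∀ r ∈ Set.Icc (0:ℝ) s₀, (∫ v in (0:ℝ)..r, ζ v ^ 2) = μ / α * r := by
    intro r hr
    rw [intervalIntegral.integral_congr (g := fun _ => μ / α) ?_]
    · simp
      ring
    · intro v hv
      rw [Set.uIcc_of_le hr.1] at hv
      have hv' : v ∈ Set.Icc 0 s₀ := ⟨hv.1, hv.2.trans hr.2⟩
      simp only [hζval v hv', hk2]
  -- integrability of the full integrand
  have hQcont : Continuous (fun r : ℝ => ∫ v in (0:ℝ)..r, ζ v ^ 2) :=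
    intervalIntegral.continuous_primitive hζsqint 0
  have hΦmeas : Measurable (fun r : ℝ =>
      ζ r * Real.exp (-μ * r - α * ∫ v in (0:ℝ)..r, ζ v ^ 2)) := by
    apply hζmeas.mul
    exact (Real.continuous_exp.comp
      ((continuous_const.mul continuous_id).sub (continuous_const.mul hQcont))).measurable
  have hΦint : ∀ a b : ℝ, 0 ≤ a → 0 ≤ b → IntervalIntegrable (fun r : ℝ =>
      ζ r * Real.exp (-μ * r - α * ∫ v in (0:ℝ)..r, ζ v ^ 2)) volume a b := by
    intro a b ha hb
    apply IntervalIntegrable.of_bound' hΦmeas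
    intro x hx
    have hx0 : 0 ≤ x := le_of_lt (lt_of_le_of_lt (le_min ha hb) hx.1)
    have hQnn : (0:ℝ) ≤ ∫ v in (0:ℝ)..x, ζ v ^ 2 :=
      intervalIntegral.integral_nonneg hx0 (fun v _ => sq_nonneg _)
    have hexp : Real.exp (-μ * x - α * ∫ v in (0:ℝ)..x, ζ v ^ 2) ≤ 1 := by
      rw [show (1:ℝ) = Real.exp 0 by simp]
      apply Real.exp_le_exp.2
      nlinarith
    rw [abs_of_nonneg (mul_nonneg (hζnn x) (Real.exp_pos _).le)]
    calc ζ x * Real.exp _ ≤ k * 1 := mul_le_mul (hζle x) hexp (Real.exp_pos _).le hk0.le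
      _ = k := mul_one k
  -- the value of the candidate strategy
  have hval : (∫ r in (0:ℝ)..t,
      ζ r * Real.exp (-μ * r - α * ∫ v in (0:ℝ)..r, ζ v ^ 2))
      = (1 - Real.exp (-2 * c * φ)) / (2 * c) := by
    have hsplit := intervalIntegral.integral_add_adjacent_intervals
      (hΦint 0 s₀ le_rfl hs00) (hΦint s₀ t hs00 (hs00.trans hs0t))
    have hsecond : (∫ r in s₀..t,
        ζ r * Real.exp (-μ * r - α * ∫ v in (0:ℝ)..r, ζ v ^ 2)) = 0 := by
      rw [intervalIntegral.integral_of_le hs0t]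
      rw [MeasureTheory.setIntegral_congr_fun measurableSet_Ioc
        (g := fun _ => (0:ℝ)) ?_]
      · simp
      · intro r hr
        have : r ∉ Set.Icc 0 s₀ := fun hmem => absurd hmem.2 (not_le.2 hr.1)
        simp [hζzero r this]
    have hfirst : (∫ r in (0:ℝ)..s₀,
        ζ r * Real.exp (-μ * r - α * ∫ v in (0:ℝ)..r, ζ v ^ 2))
        = k / (2 * μ) * (1 - Real.exp (-(2 * μ) * s₀)) := by
      rw [intervalIntegral.integral_congr (g := fun r => k * Real.exp (-(2 * μ) * r)) ?_]
      · have hd : ∀ r : ℝ, HasDerivAt (fun r : ℝ => -(k / (2 * μ)) * Real.exp (-(2 * μ) * r))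
            (k * Real.exp (-(2 * μ) * r)) r := by
          intro r
          have h1 : HasDerivAt (fun r : ℝ => -(2 * μ) * r) (-(2 * μ)) r := by
            simpa using (hasDerivAt_id r).const_mul (-(2 * μ))
          have h2 := ((Real.hasDerivAt_exp (-(2 * μ) * r)).comp r h1).const_mul
            (-(k / (2 * μ)))
          refine h2.congr_deriv ?_
          field_simp
        rw [intervalIntegral.integral_eq_sub_of_hasDerivAt (fun r _ => hd r)
          (Continuous.intervalIntegrable (by fun_prop) _ _)]
        simp
        ring
      · intro r hr
        rw [Set.uIcc_of_le hs00] at hr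
        show ζ r * Real.exp (-μ * r - α * ∫ v in (0:ℝ)..r, ζ v ^ 2)
            = k * Real.exp (-(2 * μ) * r)
        rw [hζval r hr, hQ r hr]
        congr 2
        field_simp
        ring
    have hconst1 : (2 * μ) * s₀ = 2 * c * φ := by
      rw [hs₀]
      linear_combination 2 * φ * hμc
    have hconst2 : k / (2 * μ) = 1 / (2 * c) := by
      rw [div_eq_div_iff (by positivity) (by positivity)]
      linear_combination 2 * hkc
    have : (∫ r in (0:ℝ)..t,
        ζ r * Real.exp (-μ * r - α * ∫ v in (0:ℝ)..r, ζ v ^ 2))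
        = k / (2 * μ) * (1 - Real.exp (-(2 * μ) * s₀)) := by
      rw [← hsplit, hfirst, hsecond]; ring
    rw [this, hconst2, show -(2 * μ) * s₀ = -2 * c * φ by linear_combination -hconst1]
    ring
  -- the total amount sold by the candidate strategy
  have hsum : (∫ r in (0:ℝ)..t, ζ r) = φ := by
    have hsplit := intervalIntegral.integral_add_adjacent_intervals
      (hζint 0 s₀) (hζint s₀ t)
    have hsecond : (∫ r in s₀..t, ζ r) = 0 := by
      rw [intervalIntegral.integral_of_le hs0t]
      rw [MeasureTheory.setIntegral_congr_fun measurableSet_Ioc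
        (g := fun _ => (0:ℝ)) ?_]
      · simp
      · intro r hr
        exact hζzero r (fun hmem => absurd hmem.2 (not_le.2 hr.1))
    have hfirst : (∫ r in (0:ℝ)..s₀, ζ r) = k * s₀ := by
      rw [intervalIntegral.integral_congr (g := fun _ => k) ?_]
      · simp [mul_comm]
      · intro r hr
        rw [Set.uIcc_of_le hs00] at hr
        exact hζval r hr
    have hks : k * s₀ = φ := by
      rw [hs₀]
      linear_combination φ * hroot
    rw [← hsplit, hsecond, hfirst, hks, add_zero]
  refine ⟨?_, hval⟩
  -- now the sSup part
  set V := (1 - Real.exp (-2 * c * φ)) / (2 * c) with hV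
  set S := {y : ℝ | ∃ ζ : ℝ → ℝ, Measurable ζ ∧
      (∃ M : ℝ, ∀ r ∈ Set.Icc (0 : ℝ) t, ζ r ≤ M) ∧
      (∀ r ∈ Set.Icc (0 : ℝ) t, 0 ≤ ζ r) ∧
      (∫ r in (0 : ℝ)..t, ζ r) ≤ φ ∧
      y = ∫ r in (0 : ℝ)..t,
            ζ r * Real.exp (-μ * r - α * ∫ v in (0 : ℝ)..r, ζ v ^ 2)} with hS
  have hmem : V ∈ S := by
    refine ⟨ζ, hζmeas, ⟨k, fun r _ => hζle r⟩, fun r _ => hζnn r, hsum.le, hval.symm⟩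
  have hub : ∀ y ∈ S, y ≤ V := by
    intro y hy
    obtain ⟨ξ, hξm, ⟨M, hM⟩, hξnn, hξφ, rfl⟩ := hy
    set M' := max M 0 with hM'
    have hM'0 : 0 ≤ M' := le_max_right _ _
    set ξ' : ℝ → ℝ := Set.indicator (Set.Icc 0 t) ξ with hξ'def
    have hξ'm : Measurable ξ' := hξm.indicator measurableSet_Icc
    have hξ'eq : ∀ r ∈ Set.Icc (0:ℝ) t, ξ' r = ξ r := fun r hr => by
      rw [hξ'def]; exact Set.indicator_of_mem hr ξ
    have hξ'nn : ∀ r, 0 ≤ ξ' r := by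
      intro r
      by_cases hr : r ∈ Set.Icc (0:ℝ) t
      · rw [hξ'eq r hr]; exact hξnn r hr
      · rw [hξ'def, Set.indicator_of_notMem hr]
    have hξ'le : ∀ r, ξ' r ≤ M' := by
      intro r
      by_cases hr : r ∈ Set.Icc (0:ℝ) t
      · rw [hξ'eq r hr]; exact (hM r hr).trans (le_max_left _ _)
      · rw [hξ'def, Set.indicator_of_notMem hr]; exact hM'0
    have hξ'abs : ∀ r, |ξ' r| ≤ M' := fun r => by
      rw [abs_of_nonneg (hξ'nn r)]; exact hξ'le r
    have hξ'int : ∀ a b : ℝ, IntervalIntegrable ξ' volume a b := fun a b =>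
      IntervalIntegrable.of_bound' hξ'm (fun x _ => hξ'abs x)
    have hξ'sqint : ∀ a b : ℝ, IntervalIntegrable (fun v => ξ' v ^ 2) volume a b := by
      intro a b
      apply IntervalIntegrable.of_bound' (C := M' ^ 2) (hξ'm.pow_const 2)
      intro x _
      rw [abs_of_nonneg (sq_nonneg _)]
      nlinarith [hξ'nn x, hξ'le x]
    have hFnn : ∀ r : ℝ, 0 ≤ r → 0 ≤ ∫ v in (0:ℝ)..r, ξ' v := fun r hr =>
      intervalIntegral.integral_nonneg hr (fun v _ => hξ'nn v)
    have hQnn : ∀ r : ℝ, 0 ≤ r → 0 ≤ ∫ v in (0:ℝ)..r, ξ' v ^ 2 := fun r hr =>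
      intervalIntegral.integral_nonneg hr (fun v _ => sq_nonneg _)
    have hFcont : Continuous (fun x : ℝ => ∫ v in (0:ℝ)..x, ξ' v) :=
      intervalIntegral.continuous_primitive hξ'int 0
    have hQcont' : Continuous (fun x : ℝ => ∫ v in (0:ℝ)..x, ξ' v ^ 2) :=
      intervalIntegral.continuous_primitive hξ'sqint 0
    -- rewrite the proceeds in terms of the truncated strategy ξ'
    have houter : (∫ r in (0:ℝ)..t, ξ r * Real.exp (-μ * r - α * ∫ v in (0:ℝ)..r, ξ v ^ 2))
        = ∫ r in (0:ℝ)..t, ξ' r * Real.exp (-μ * r - α * ∫ v in (0:ℝ)..r, ξ' v ^ 2) := by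
      rw [intervalIntegral.integral_of_le ht0.le, intervalIntegral.integral_of_le ht0.le]
      apply MeasureTheory.setIntegral_congr_fun measurableSet_Ioc
      intro r hr
      have hrIcc : r ∈ Set.Icc (0:ℝ) t := ⟨hr.1.le, hr.2⟩
      have hin : (∫ v in (0:ℝ)..r, ξ v ^ 2) = ∫ v in (0:ℝ)..r, ξ' v ^ 2 := by
        apply intervalIntegral.integral_congr
        intro v hv
        rw [Set.uIcc_of_le hr.1.le] at hv
        have hv' : v ∈ Set.Icc (0:ℝ) t := ⟨hv.1, hv.2.trans hr.2⟩
        show ξ v ^ 2 = ξ' v ^ 2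
        rw [hξ'eq v hv']
      show ξ r * Real.exp (-μ * r - α * ∫ v in (0:ℝ)..r, ξ v ^ 2)
          = ξ' r * Real.exp (-μ * r - α * ∫ v in (0:ℝ)..r, ξ' v ^ 2)
      rw [hin, hξ'eq r hrIcc]
    have hFt : (∫ v in (0:ℝ)..t, ξ' v) ≤ φ := by
      have : (∫ v in (0:ℝ)..t, ξ' v) = ∫ v in (0:ℝ)..t, ξ v := by
        apply intervalIntegral.integral_congr
        intro v hv
        rw [Set.uIcc_of_le ht0.le] at hv
        exact hξ'eq v hv
      rw [this]; exact hξφ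
    -- exponent comparison
    have hcmp : ∀ r ∈ Set.Icc (0:ℝ) t,
        2 * c * ∫ v in (0:ℝ)..r, ξ' v ≤ μ * r + α * ∫ v in (0:ℝ)..r, ξ' v ^ 2 := by
      intro r hr
      have h1 : (∫ v in (0:ℝ)..r, 2 * c * ξ' v)
          ≤ ∫ v in (0:ℝ)..r, (μ + α * ξ' v ^ 2) := by
        apply intervalIntegral.integral_mono_on hr.1 ((hξ'int 0 r).const_mul _)
          (intervalIntegrable_const.add ((hξ'sqint 0 r).const_mul _))
        intro v _
        exact hAMGM (ξ' v)
      rw [intervalIntegral.integral_const_mul] at h1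
      rw [intervalIntegral.integral_add intervalIntegrable_const
        ((hξ'sqint 0 r).const_mul _), intervalIntegral.integral_const,
        intervalIntegral.integral_const_mul] at h1
      simpa [smul_eq_mul, mul_comm μ r] using h1
    -- integrability of both integrands
    have hint1 : IntervalIntegrable (fun r : ℝ =>
        ξ' r * Real.exp (-μ * r - α * ∫ v in (0:ℝ)..r, ξ' v ^ 2)) volume 0 t := by
      apply IntervalIntegrable.of_bound'
        (hξ'm.mul (Real.continuous_exp.comp
          ((continuous_const.mul continuous_id).sub
            (continuous_const.mul hQcont'))).measurable)
      intro x hx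
      have hx0 : 0 ≤ x := le_of_lt (lt_of_le_of_lt (le_min le_rfl ht0.le) hx.1)
      have hexp : Real.exp (-μ * x - α * ∫ v in (0:ℝ)..x, ξ' v ^ 2) ≤ 1 := by
        rw [show (1:ℝ) = Real.exp 0 by simp]
        apply Real.exp_le_exp.2
        nlinarith [hQnn x hx0]
      show |ξ' x * Real.exp (-μ * x - α * ∫ v in (0:ℝ)..x, ξ' v ^ 2)| ≤ M'
      rw [abs_of_nonneg (mul_nonneg (hξ'nn x) (Real.exp_pos _).le)]
      calc ξ' x * Real.exp _ ≤ M' * 1 :=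
            mul_le_mul (hξ'le x) hexp (Real.exp_pos _).le hM'0
        _ = M' := mul_one M'
    have hint2 : IntervalIntegrable (fun r : ℝ =>
        ξ' r * Real.exp (-(2 * c * ∫ v in (0:ℝ)..r, ξ' v))) volume 0 t := by
      apply IntervalIntegrable.of_bound'
        (hξ'm.mul (Real.continuous_exp.comp
          (continuous_const.mul hFcont).neg).measurable)
      intro x hx
      have hx0 : 0 ≤ x := le_of_lt (lt_of_le_of_lt (le_min le_rfl ht0.le) hx.1)
      have hexp : Real.exp (-(2 * c * ∫ v in (0:ℝ)..x, ξ' v)) ≤ 1 := by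
        rw [show (1:ℝ) = Real.exp 0 by simp]
        apply Real.exp_le_exp.2
        have := hFnn x hx0
        nlinarith
      show |ξ' x * Real.exp (-(2 * c * ∫ v in (0:ℝ)..x, ξ' v))| ≤ M'
      rw [abs_of_nonneg (mul_nonneg (hξ'nn x) (Real.exp_pos _).le)]
      calc ξ' x * Real.exp _ ≤ M' * 1 :=
            mul_le_mul (hξ'le x) hexp (Real.exp_pos _).le hM'0
        _ = M' := mul_one M'
    -- monotone comparison of the two integrals
    have hmono : (∫ r in (0:ℝ)..t, ξ' r * Real.exp (-μ * r - α * ∫ v in (0:ℝ)..r, ξ' v ^ 2))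
        ≤ ∫ r in (0:ℝ)..t, ξ' r * Real.exp (-(2 * c * ∫ v in (0:ℝ)..r, ξ' v)) := by
      apply intervalIntegral.integral_mono_on ht0.le hint1 hint2
      intro r hr
      apply mul_le_mul_of_nonneg_left _ (hξ'nn r)
      apply Real.exp_le_exp.2
      have := hcmp r hr
      linarith
    -- apply the key inequality
    have hkey := key_ineq (fun r => 2 * c * ξ' r) (hξ'm.const_mul _) (2 * c * M')
      (fun r => mul_nonneg (by positivity) (hξ'nn r))
      (fun r => mul_le_mul_of_nonneg_left (hξ'le r) (by positivity)) t ht0.le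
    simp only [intervalIntegral.integral_const_mul] at hkey
    have hrw : (∫ r in (0:ℝ)..t, 2 * c * ξ' r * Real.exp (-(2 * c * ∫ v in (0:ℝ)..r, ξ' v)))
        = 2 * c * ∫ r in (0:ℝ)..t, ξ' r * Real.exp (-(2 * c * ∫ v in (0:ℝ)..r, ξ' v)) := by
      rw [← intervalIntegral.integral_const_mul]
      apply intervalIntegral.integral_congr
      intro r _
      show 2 * c * ξ' r * Real.exp _ = 2 * c * (ξ' r * Real.exp _)
      ring
    rw [hrw] at hkey
    have hexpmono : 1 - Real.exp (-(2 * c * ∫ v in (0:ℝ)..t, ξ' v))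
        ≤ 1 - Real.exp (-(2 * c * φ)) := by
      have h1 : 2 * c * ∫ v in (0:ℝ)..t, ξ' v ≤ 2 * c * φ :=
        mul_le_mul_of_nonneg_left hFt (by positivity)
      have := Real.exp_le_exp.2 (neg_le_neg h1)
      linarith
    have hX2 : (∫ r in (0:ℝ)..t, ξ' r * Real.exp (-(2 * c * ∫ v in (0:ℝ)..r, ξ' v)))
        ≤ (1 - Real.exp (-(2 * c * φ))) / (2 * c) := by
      rw [le_div_iff₀ (by positivity)]
      calc (∫ r in (0:ℝ)..t, ξ' r * Real.exp (-(2 * c * ∫ v in (0:ℝ)..r, ξ' v))) * (2 * c)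
          = 2 * c * ∫ r in (0:ℝ)..t, ξ' r * Real.exp (-(2 * c * ∫ v in (0:ℝ)..r, ξ' v)) := by
            ring
        _ ≤ 1 - Real.exp (-(2 * c * ∫ v in (0:ℝ)..t, ξ' v)) := hkey
        _ ≤ 1 - Real.exp (-(2 * c * φ)) := hexpmono
    rw [hV, houter]
    calc (∫ r in (0:ℝ)..t, ξ' r * Real.exp (-μ * r - α * ∫ v in (0:ℝ)..r, ξ' v ^ 2))
        ≤ (1 - Real.exp (-(2 * c * φ))) / (2 * c) := hmono.trans hX2
      _ = (1 - Real.exp (-2 * c * φ)) / (2 * c) := by ring_nf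
  exact le_antisymm (csSup_le ⟨V, hmem⟩ hub) (le_csSup ⟨V, hub⟩ hmem)
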